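/- Assuming the lambda calculus with constructors is confluent, case-completion reflects convertibility on hereditarily defined terms: if t₁ and t₂ are hereditarily defined and ⌈t₁⌉ ≈ ⌈t₂⌉ (convertible by the calculus), then t₁ ≈ t₂. -/
import Mathlib


/- Terms of the lambda calculus with `n` constructors (de Bruijn indices).
`Ob n` plays the role of `Option (Tm n)`: a case-binding is a partial map
`Fin n → Ob n` from constructors to terms. -/
mutual
inductive Tm (n : ℕ) : Type where
  | var : ℕ → Tm n
  | app : Tm n → Tm n → Tm n
  | lam : Tm n → Tm n
  | cst : Fin n → Tm n
  | cas : (Fin n → Ob n) → Tm n → Tm n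
inductive Ob (n : ℕ) : Type where
  | none : Ob n
  | some : Tm n → Ob n
end

namespace LC

variable {n : ℕ}

/- Shift free de Bruijn indices `≥ k` by `d`. -/
mutual
def lift (d k : ℕ) : Tm n → Tm n
  | .var i => .var (if i < k then i else i + d)
  | .app t u => .app (lift d k t) (lift d k u)
  | .lam t => .lam (lift d (k+1) t)
  | .cst c => .cst c
  | .cas θ t => .cas (fun c => liftO d k (θ c)) (lift d k t)
def liftO (d k : ℕ) : Ob n → Ob n
  | .none => .none
  | .some t => .some (lift d k t)
end

/- Lift a case-binding (used for the CaseLam rule, where the bound variable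
must not occur free in the binding). -/
def liftB (θ : Fin n → Ob n) : Fin n → Ob n := fun c => liftO 1 0 (θ c)

/- Substitution of `u` for the variable `k` (capture-avoiding). -/
mutual
def subst (u : Tm n) (k : ℕ) : Tm n → Tm n
  | .var i => if i < k then .var i else if i = k then lift k 0 u else .var (i-1)
  | .app t v => .app (subst u k t) (subst u k v)
  | .lam t => .lam (subst u (k+1) t)
  | .cst c => .cst c
  | .cas θ t => .cas (fun c => substO u k (θ c)) (subst u k t)
def substO (u : Tm n) (k : ℕ) : Ob n → Ob n
  | .none => .none
  | .some t => .some (subst u k t)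
end

/- `{θ}·(-)` applied inside an optional branch. -/
def casO (θ : Fin n → Ob n) : Ob n → Ob n
  | .none => .none
  | .some u => .some (.cas θ u)

/- Composition of case-bindings: `(θ∘φ)(c) = {θ}·φ(c)` for `c ∈ dom φ`. -/
def compB (θ φ : Fin n → Ob n) : Fin n → Ob n := fun c => casO θ (φ c)

/- One-step reduction of the lambda calculus with constructors:
AppLam, LamApp, CaseCons, CaseApp, CaseLam, CaseCase, closed under all contexts. -/
inductive Step : Tm n → Tm n → Prop where
  | appLam (t u : Tm n) : Step (.app (.lam t) u) (subst u 0 t)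
  | lamApp (t : Tm n) : Step (.lam (.app (lift 1 0 t) (.var 0))) t
  | caseCons (θ : Fin n → Ob n) (c : Fin n) (u : Tm n) :
      θ c = .some u → Step (.cas θ (.cst c)) u
  | caseApp (θ : Fin n → Ob n) (t u : Tm n) :
      Step (.cas θ (.app t u)) (.app (.cas θ t) u)
  | caseLam (θ : Fin n → Ob n) (t : Tm n) :
      Step (.cas θ (.lam t)) (.lam (.cas (liftB θ) t))
  | caseCase (θ φ : Fin n → Ob n) (t : Tm n) :
      Step (.cas θ (.cas φ t)) (.cas (compB θ φ) t)
  | appL {t t' : Tm n} (u : Tm n) : Step t t' → Step (.app t u) (.app t' u)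
  | appR (t : Tm n) {u u' : Tm n} : Step u u' → Step (.app t u) (.app t u')
  | lamC {t t' : Tm n} : Step t t' → Step (.lam t) (.lam t')
  | casT (θ : Fin n → Ob n) {t t' : Tm n} : Step t t' → Step (.cas θ t) (.cas θ t')
  | casB (θ : Fin n → Ob n) (c : Fin n) {u u' : Tm n} (t : Tm n) :
      θ c = .some u → Step u u' →
      Step (.cas θ t) (.cas (Function.update θ c (.some u')) t)

/- One-step reduction by the CaseCase rule only (closed under all contexts). -/
inductive StepCC : Tm n → Tm n → Prop where
  | caseCase (θ φ : Fin n → Ob n) (t : Tm n) :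
      StepCC (.cas θ (.cas φ t)) (.cas (compB θ φ) t)
  | appL {t t' : Tm n} (u : Tm n) : StepCC t t' → StepCC (.app t u) (.app t' u)
  | appR (t : Tm n) {u u' : Tm n} : StepCC u u' → StepCC (.app t u) (.app t u')
  | lamC {t t' : Tm n} : StepCC t t' → StepCC (.lam t) (.lam t')
  | casT (θ : Fin n → Ob n) {t t' : Tm n} : StepCC t t' → StepCC (.cas θ t) (.cas θ t')
  | casB (θ : Fin n → Ob n) (c : Fin n) {u u' : Tm n} (t : Tm n) :
      θ c = .some u → StepCC u u' →
      StepCC (.cas θ t) (.cas (Function.update θ c (.some u')) t)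

/- One-step reduction λC⁻ : every rule except CaseCase (closed under all contexts). -/
inductive StepM : Tm n → Tm n → Prop where
  | appLam (t u : Tm n) : StepM (.app (.lam t) u) (subst u 0 t)
  | lamApp (t : Tm n) : StepM (.lam (.app (lift 1 0 t) (.var 0))) t
  | caseCons (θ : Fin n → Ob n) (c : Fin n) (u : Tm n) :
      θ c = .some u → StepM (.cas θ (.cst c)) u
  | caseApp (θ : Fin n → Ob n) (t u : Tm n) :
      StepM (.cas θ (.app t u)) (.app (.cas θ t) u)
  | caseLam (θ : Fin n → Ob n) (t : Tm n) :
      StepM (.cas θ (.lam t)) (.lam (.cas (liftB θ) t))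
  | appL {t t' : Tm n} (u : Tm n) : StepM t t' → StepM (.app t u) (.app t' u)
  | appR (t : Tm n) {u u' : Tm n} : StepM u u' → StepM (.app t u) (.app t u')
  | lamC {t t' : Tm n} : StepM t t' → StepM (.lam t) (.lam t')
  | casT (θ : Fin n → Ob n) {t t' : Tm n} : StepM t t' → StepM (.cas θ t) (.cas θ t')
  | casB (θ : Fin n → Ob n) (c : Fin n) {u u' : Tm n} (t : Tm n) :
      θ c = .some u → StepM u u' →
      StepM (.cas θ t) (.cas (Function.update θ c (.some u')) t)

/- A term is defined when none of its subterms is a match failure `{θ}·c` with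
`c ∉ dom θ`. -/
inductive Defined : Tm n → Prop where
  | var (i : ℕ) : Defined (.var i)
  | cst (c : Fin n) : Defined (.cst c)
  | app {t u : Tm n} : Defined t → Defined u → Defined (.app t u)
  | lam {t : Tm n} : Defined t → Defined (.lam t)
  | cas {θ : Fin n → Ob n} {t : Tm n} :
      (∀ c u, θ c = .some u → Defined u) → Defined t →
      (∀ c, t = .cst c → θ c ≠ .none) → Defined (.cas θ t)

/- Hereditarily defined: every reduct (in any number of steps) is defined. -/
def HD (t : Tm n) : Prop := ∀ u, Relation.ReflTransGen Step t u → Defined u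

section Completion
variable [NeZero n]

/- The canonical match failure `{}·c₁` used to fill missing branches. -/
def failTm : Tm n := .cas (fun _ => .none) (.cst 0)

/- Case-completion: replace every case-binding by its total completion,
filling each missing branch with `{}·c₁`. -/
mutual
def cpl : Tm n → Tm n
  | .var i => .var i
  | .app t u => .app (cpl t) (cpl u)
  | .lam t => .lam (cpl t)
  | .cst c => .cst c
  | .cas θ t => .cas (fun c => .some (cplO (θ c))) (cpl t)
def cplO : Ob n → Tm n
  | .none => failTm
  | .some u => cpl u
end

end Completion

/- The structural measure μ. -/
mutual
def mes : Tm n → ℕ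
  | .var _ => 1
  | .cst _ => 1
  | .lam t => mes t + 1
  | .app t u => mes t + mes u
  | .cas θ t => mes t * ((∑ c : Fin n, mesO (θ c)) + 2)
def mesO : Ob n → ℕ
  | .none => 0
  | .some t => mes t
end

end LC

namespace LC


variable {n : ℕ}

/-! ### Junk terms: towers of cases over the canonical match failure -/

inductive Junk [NeZero n] : Tm n → Prop where
  | base : Junk (.cas (fun _ => .none) (.cst 0))
  | step (θ : Fin n → Ob n) {g : Tm n} : Junk g → Junk (.cas θ g)

section Aux
variable [NeZero n]

theorem junk_lift {g : Tm n} (d k : ℕ) (h : Junk g) : Junk (lift d k g) := by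
  induction h with
  | base => exact Junk.base
  | step θ hj ih => exact Junk.step _ ih

theorem junk_subst {g : Tm n} (u : Tm n) (k : ℕ) (h : Junk g) : Junk (subst u k g) := by
  induction h with
  | base => exact Junk.base
  | step θ hj ih => exact Junk.step _ ih

theorem junk_lift_inv {g' : Tm n} (h : Junk g') :
    ∀ {d k : ℕ} {g : Tm n}, g' = lift d k g → Junk g := by
  induction h with
  | base =>
    intro d k g hg
    cases g with
    | var i => simp [lift] at hg
    | app a b => simp [lift] at hg
    | lam a => simp [lift] at hg
    | cst c => simp [lift] at hg
    | cas θ a =>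
      rw [show lift d k (.cas θ a) = .cas (fun c => liftO d k (θ c)) (lift d k a) from rfl] at hg
      injection hg with h1 h2
      have hθ : θ = fun _ => Ob.none := by
        funext c
        have := congrFun h1 c
        cases hc : θ c with
        | none => rfl
        | some w => rw [hc] at this; exact absurd this.symm (by simp [liftO])
      have ha : a = .cst 0 := by
        cases a with
        | var i => simp [lift] at h2
        | app x y => simp [lift] at h2
        | lam x => simp [lift] at h2
          | cst c =>
          have h2' : (Tm.cst (n:=n) 0) = .cst c := h2
          injection h2' with hc; rw [← hc]
        | cas φ x => simp [lift] at h2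
      subst hθ; subst ha; exact Junk.base
  | step θ hj ih =>
    intro d k g hg
    cases g with
    | var i => simp [lift] at hg
    | app a b => simp [lift] at hg
    | lam a => simp [lift] at hg
    | cst c => simp [lift] at hg
    | cas φ a =>
      rw [show lift d k (.cas φ a) = .cas (fun c => liftO d k (φ c)) (lift d k a) from rfl] at hg
      injection hg with h1 h2
      exact Junk.step _ (ih h2)

theorem junk_no_cst {g : Tm n} (h : Junk g) : ∀ c : Fin n, g ≠ .cst c := by
  cases h <;> intro c h <;> exact absurd h (by simp)

theorem junk_step {g g' : Tm n} (h : Junk g) (hs : Step g g') : Junk g' := by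
  induction h generalizing g' with
  | base =>
    cases hs with
    | caseCons θ c u hc => exact absurd hc (by simp)
    | casT θ hst => cases hst
    | casB θ c t hc hst => exact absurd hc (by simp)
  | step θ hj ih =>
    rename_i g₀
    cases hs with
    | caseCons θ c u hc =>
      cases hj
    | caseApp θ a b => cases hj
    | caseLam θ a => cases hj
    | caseCase θ φ a =>
      cases hj with
      | base =>
        have : compB θ (fun _ => Ob.none) = fun _ => Ob.none := rfl
        rw [this]; exact Junk.base
      | step φ' hj' => exact Junk.step _ hj'
    | casT θ hst => exact Junk.step _ (ih hst)
    | casB θ c t hc hst => exact Junk.step _ hj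

end Aux

/-! ### The simulation relation -/

mutual
inductive Sim [NeZero n] : Tm n → Tm n → Prop where
  | var (i : ℕ) : Sim (.var i) (.var i)
  | cst (c : Fin n) : Sim (.cst c) (.cst c)
  | app {s₁ t₁ s₂ t₂ : Tm n} : Sim s₁ t₁ → Sim s₂ t₂ → Sim (.app s₁ s₂) (.app t₁ t₂)
  | lam {s t : Tm n} : Sim s t → Sim (.lam s) (.lam t)
  | cas {θ Ξ : Fin n → Ob n} {s t : Tm n} :
      (∀ c, SimO (θ c) (Ξ c)) → Sim s t → Sim (.cas θ s) (.cas Ξ t)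
inductive SimO [NeZero n] : Ob n → Ob n → Prop where
  | some {a b : Tm n} : Sim a b → SimO (.some a) (.some b)
  | junk {g : Tm n} : Junk g → SimO (.some g) .none
end

section Aux2
variable [NeZero n]

theorem simO_some_inv {u : Tm n} {O : Ob n} (h : SimO (.some u) O) :
    (∃ w, O = .some w ∧ Sim u w) ∨ (O = .none ∧ Junk u) := by
  cases h with
  | some hb => exact Or.inl ⟨_, rfl, hb⟩
  | junk hj => exact Or.inr ⟨rfl, hj⟩

-- completion is a simulation
mutual
theorem sim_cpl : ∀ t : Tm n, Sim (cpl t) t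
  | .var i => .var i
  | .app a b => .app (sim_cpl a) (sim_cpl b)
  | .lam a => .lam (sim_cpl a)
  | .cst c => .cst c
  | .cas θ a => .cas (fun c => simO_cpl (θ c)) (sim_cpl a)
theorem simO_cpl : ∀ o : Ob n, SimO (.some (cplO o)) o
  | .none => .junk Junk.base
  | .some a => .some (sim_cpl a)
end

theorem junk_no_sim {g : Tm n} (h : Junk g) : ∀ {w : Tm n}, ¬ Sim g w := by
  induction h with
  | base =>
    intro w h
    cases h with
    | cas hb hs => have := hb 0; cases this
  | step θ hj ih =>
    intro w h
    cases h with
    | cas hb hs => exact ih hs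

-- decompletion is unique
mutual
theorem sim_unique : ∀ (s : Tm n) {t₁ t₂ : Tm n}, Sim s t₁ → Sim s t₂ → t₁ = t₂
  | .var i, _, _, h₁, h₂ => by cases h₁; cases h₂; rfl
  | .cst c, _, _, h₁, h₂ => by cases h₁; cases h₂; rfl
  | .app a b, _, _, h₁, h₂ => by
    cases h₁ with
    | app ha1 hb1 =>
      cases h₂ with
      | app ha2 hb2 => rw [sim_unique a ha1 ha2, sim_unique b hb1 hb2]
  | .lam a, _, _, h₁, h₂ => by
    cases h₁ with
    | lam ha1 =>
      cases h₂ with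
      | lam ha2 => rw [sim_unique a ha1 ha2]
  | .cas θ a, _, _, h₁, h₂ => by
    cases h₁ with
    | cas hb1 ha1 =>
      cases h₂ with
      | cas hb2 ha2 =>
        rw [sim_unique a ha1 ha2]
        have : ∀ c, _ = _ := fun c => simO_unique (θ c) (hb1 c) (hb2 c)
        rw [funext this]
theorem simO_unique : ∀ (o : Ob n) {O₁ O₂ : Ob n}, SimO o O₁ → SimO o O₂ → O₁ = O₂
  | .none, _, _, h₁, _ => by cases h₁
  | .some a, _, _, h₁, h₂ => by
    cases h₁ with
    | some ha1 =>
      cases h₂ with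
      | some ha2 => rw [sim_unique a ha1 ha2]
      | junk hj => exact absurd ha1 (junk_no_sim hj)
    | junk hj =>
      cases h₂ with
      | some ha2 => exact absurd ha2 (junk_no_sim hj)
      | junk _ => rfl
end

end Aux2


/-! ### Reflexive-transitive congruence lemmas -/

section RT
open Relation

theorem rt_appL {a a' b : Tm n} (h : ReflTransGen Step a a') :
    ReflTransGen Step (.app a b) (.app a' b) := by
  induction h with
  | refl => exact .refl
  | tail _ h2 ih => exact ih.tail (.appL _ h2)

theorem rt_appR {a b b' : Tm n} (h : ReflTransGen Step b b') :
    ReflTransGen Step (.app a b) (.app a b') := by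
  induction h with
  | refl => exact .refl
  | tail _ h2 ih => exact ih.tail (.appR _ h2)

theorem rt_app {a a' b b' : Tm n} (h : ReflTransGen Step a a') (h' : ReflTransGen Step b b') :
    ReflTransGen Step (.app a b) (.app a' b') :=
  (rt_appL h).trans (rt_appR h')

theorem rt_lam {a a' : Tm n} (h : ReflTransGen Step a a') :
    ReflTransGen Step (.lam a) (.lam a') := by
  induction h with
  | refl => exact .refl
  | tail _ h2 ih => exact ih.tail (.lamC h2)

theorem rt_casT {Ξ : Fin n → Ob n} {a a' : Tm n} (h : ReflTransGen Step a a') :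
    ReflTransGen Step (.cas Ξ a) (.cas Ξ a') := by
  induction h with
  | refl => exact .refl
  | tail _ h2 ih => exact ih.tail (.casT _ h2)

theorem rt_casB {Ξ : Fin n → Ob n} {c : Fin n} {w w' a : Tm n} (hc : Ξ c = .some w)
    (h : ReflTransGen Step w w') :
    ReflTransGen Step (.cas Ξ a) (.cas (Function.update Ξ c (.some w')) a) := by
  induction h with
  | refl => rw [← hc, Function.update_eq_self]
  | tail h1 h2 ih =>
    rename_i mid fin
    have step : Step (.cas (Function.update Ξ c (.some mid)) a)
        (.cas (Function.update (Function.update Ξ c (.some mid)) c (.some fin)) a) :=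
      .casB _ c a (Function.update_self c (.some mid) Ξ) h2
    rw [Function.update_idem] at step
    exact ih.tail step

end RT

/-! ### HD lemmas -/

theorem hd_of_rt {t t' : Tm n} (h : HD t) (hr : Relation.ReflTransGen Step t t') : HD t' :=
  fun u hu => h u (hr.trans hu)

theorem hd_appL {a b : Tm n} (h : HD (.app a b)) : HD a := by
  intro u hu
  have := h (.app u b) (rt_appL hu)
  cases this with
  | app h1 h2 => exact h1

theorem hd_appR {a b : Tm n} (h : HD (.app a b)) : HD b := by
  intro u hu
  have := h (.app a u) (rt_appR hu)
  cases this with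
  | app h1 h2 => exact h2

theorem hd_lam {a : Tm n} (h : HD (.lam a)) : HD a := by
  intro u hu
  have := h (.lam u) (rt_lam hu)
  cases this with
  | lam h1 => exact h1

theorem hd_casT {Ξ : Fin n → Ob n} {a : Tm n} (h : HD (.cas Ξ a)) : HD a := by
  intro u hu
  have := h (.cas Ξ u) (rt_casT hu)
  cases this with
  | cas h1 h2 h3 => exact h2

theorem hd_casB {Ξ : Fin n → Ob n} {c : Fin n} {w a : Tm n} (h : HD (.cas Ξ a))
    (hc : Ξ c = .some w) : HD w := by
  intro u hu
  have := h (.cas (Function.update Ξ c (.some u)) a) (rt_casB hc hu)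
  cases this with
  | cas h1 h2 h3 => exact h1 c u (Function.update_self c (.some u) Ξ)

section Aux3
variable [NeZero n]

/-! ### Sim is stable under lift and subst -/

mutual
theorem sim_lift (d : ℕ) : ∀ (s : Tm n) {t : Tm n}, Sim s t → ∀ k,
    Sim (lift d k s) (lift d k t)
  | .var i, _, h, k => by cases h; exact .var _
  | .cst c, _, h, k => by cases h; exact .cst _
  | .app a b, _, h, k => by
    cases h with
    | app h1 h2 => exact .app (sim_lift d a h1 k) (sim_lift d b h2 k)
  | .lam a, _, h, k => by
    cases h with
    | lam h1 => exact .lam (sim_lift d a h1 (k+1))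
  | .cas θ a, _, h, k => by
    cases h with
    | cas hb h1 => exact .cas (fun c => simO_lift d (θ c) (hb c) k) (sim_lift d a h1 k)
theorem simO_lift (d : ℕ) : ∀ (o : Ob n) {O : Ob n}, SimO o O → ∀ k,
    SimO (liftO d k o) (liftO d k O)
  | .none, _, h, k => by cases h
  | .some a, _, h, k => by
    cases h with
    | some h1 => exact .some (sim_lift d a h1 k)
    | junk hj => exact .junk (junk_lift d k hj)
end

mutual
theorem sim_subst {u U : Tm n} (hu : Sim u U) : ∀ (s : Tm n) {t : Tm n}, Sim s t → ∀ k,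
    Sim (subst u k s) (subst U k t)
  | .var i, _, h, k => by
    cases h
    show Sim (subst u k (.var i)) (subst U k (.var i))
    by_cases h1 : i < k
    · simp only [subst, if_pos h1]; exact .var _
    · by_cases h2 : i = k
      · simp only [subst, if_neg h1, if_pos h2]; exact sim_lift k u hu 0
      · simp only [subst, if_neg h1, if_neg h2]; exact .var _
  | .cst c, _, h, k => by cases h; exact .cst _
  | .app a b, _, h, k => by
    cases h with
    | app h1 h2 => exact .app (sim_subst hu a h1 k) (sim_subst hu b h2 k)
  | .lam a, _, h, k => by
    cases h with
    | lam h1 => exact .lam (sim_subst hu a h1 (k+1))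
  | .cas θ a, _, h, k => by
    cases h with
    | cas hb h1 => exact .cas (fun c => simO_subst hu (θ c) (hb c) k) (sim_subst hu a h1 k)
theorem simO_subst {u U : Tm n} (hu : Sim u U) : ∀ (o : Ob n) {O : Ob n}, SimO o O → ∀ k,
    SimO (substO u k o) (substO U k O)
  | .none, _, h, k => by cases h
  | .some a, _, h, k => by
    cases h with
    | some h1 => exact .some (sim_subst hu a h1 k)
    | junk hj => exact .junk (junk_subst u k hj)
end

/-! ### Sim reflects lift-images (needed for the eta rule) -/

mutual
theorem sim_lift_inv (d : ℕ) : ∀ (s : Tm n) {X : Tm n} (k : ℕ), Sim (lift d k s) X →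
    ∃ s₀, X = lift d k s₀ ∧ Sim s s₀
  | .var i, _, k, h => by
    cases h
    exact ⟨.var i, rfl, .var i⟩
  | .cst c, _, k, h => by
    cases h
    exact ⟨.cst c, rfl, .cst c⟩
  | .app a b, _, k, h => by
    cases h with
    | app h1 h2 =>
      obtain ⟨a₀, rfl, ha⟩ := sim_lift_inv d a k h1
      obtain ⟨b₀, rfl, hb⟩ := sim_lift_inv d b k h2
      exact ⟨.app a₀ b₀, rfl, .app ha hb⟩
  | .lam a, _, k, h => by
    cases h with
    | lam h1 =>
      obtain ⟨a₀, rfl, ha⟩ := sim_lift_inv d a (k+1) h1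
      exact ⟨.lam a₀, rfl, .lam ha⟩
  | .cas θ a, _, k, h => by
    cases h with
    | cas hb h1 =>
      rename_i Ξ Y
      obtain ⟨a₀, rfl, ha⟩ := sim_lift_inv d a k h1
      have hB : ∀ c, ∃ O₀, Ξ c = liftO d k O₀ ∧ SimO (θ c) O₀ :=
        fun c => simO_lift_inv d (θ c) k (hb c)
      choose Ξ₀ hΞ1 hΞ2 using hB
      refine ⟨.cas Ξ₀ a₀, ?_, .cas hΞ2 ha⟩
      show Tm.cas Ξ _ = Tm.cas (fun c => liftO d k (Ξ₀ c)) _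
      rw [funext hΞ1]
theorem simO_lift_inv (d : ℕ) : ∀ (o : Ob n) {O : Ob n} (k : ℕ), SimO (liftO d k o) O →
    ∃ O₀, O = liftO d k O₀ ∧ SimO o O₀
  | .none, _, k, h => by cases h
  | .some a, _, k, h => by
    cases h with
    | some h1 =>
      obtain ⟨a₀, rfl, ha⟩ := sim_lift_inv d a k h1
      exact ⟨.some a₀, rfl, .some ha⟩
    | junk hj =>
      exact ⟨.none, rfl, .junk (junk_lift_inv hj rfl)⟩
end

end Aux3


section Main
variable [NeZero n]
open Relation

/-- Key simulation: a reduction step on a term simulating `t` is tracked by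
reductions from `t`, provided `t` is hereditarily defined. -/
theorem sim_step {s s' : Tm n} (hs : Step s s') :
    ∀ {t : Tm n}, Sim s t → HD t → ∃ t', ReflTransGen Step t t' ∧ Sim s' t' := by
  induction hs with
  | appLam a b =>
    intro t h hd
    cases h with
    | app h1 h2 =>
      cases h1 with
      | lam h1 =>
        rename_i B A
        exact ⟨subst B 0 A, .single (.appLam A B), sim_subst h2 a h1 0⟩
  | lamApp a =>
    intro t h hd
    cases h with
    | lam h1 =>
      cases h1 with
      | app hX hV =>
        cases hV
        obtain ⟨a₀, rfl, ha⟩ := sim_lift_inv 1 a 0 hX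
        exact ⟨a₀, .single (.lamApp a₀), ha⟩
  | caseCons θ c u hθ =>
    intro t h hd
    cases h with
    | cas hb h1 =>
      rename_i Ξ Y
      cases h1
      have := hb c
      rw [hθ] at this
      rcases simO_some_inv this with ⟨w, hw, hsim⟩ | ⟨hw, hj⟩
      · exact ⟨w, .single (.caseCons Ξ c w hw), hsim⟩
      · exfalso
        have hdef := hd _ (.refl)
        cases hdef with
        | cas _ _ h3 => exact h3 c rfl hw
  | caseApp θ a b =>
    intro t h hd
    cases h with
    | cas hb h1 =>
      cases h1 with
      | app hA hB =>
        rename_i Ξ A B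
        exact ⟨.app (.cas Ξ A) B, .single (.caseApp Ξ A B), .app (.cas hb hA) hB⟩
  | caseLam θ a =>
    intro t h hd
    cases h with
    | cas hb h1 =>
      cases h1 with
      | lam hA =>
        rename_i Ξ A
        exact ⟨.lam (.cas (liftB Ξ) A), .single (.caseLam Ξ A),
          .lam (.cas (fun c => simO_lift 1 (θ c) (hb c) 0) hA)⟩
  | caseCase θ φ a =>
    intro t h hd
    cases h with
    | @cas _ Ξ _ _ hb h1 =>
      cases h1 with
      | @cas _ Φ _ Y hbφ hA =>
        refine ⟨.cas (compB Ξ Φ) Y, .single (.caseCase Ξ Φ Y), .cas ?_ hA⟩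
        intro c
        show SimO (casO θ (φ c)) (casO Ξ (Φ c))
        have hc := hbφ c
        cases hφ : φ c with
        | none => rw [hφ] at hc; cases hc
        | some g =>
          rw [hφ] at hc
          rcases simO_some_inv hc with ⟨w, hw, hsim⟩ | ⟨hw, hj⟩ <;> rw [hw]
          · exact .some (.cas hb hsim)
          · exact .junk (Junk.step θ hj)
  | appL b hstep ih =>
    intro t h hd
    cases h with
    | app h1 h2 =>
      obtain ⟨A', hA', hsim⟩ := ih h1 (hd_appL hd)
      exact ⟨.app A' _, rt_appL hA', .app hsim h2⟩
  | appR a hstep ih =>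
    intro t h hd
    cases h with
    | app h1 h2 =>
      obtain ⟨B', hB', hsim⟩ := ih h2 (hd_appR hd)
      exact ⟨.app _ B', rt_appR hB', .app h1 hsim⟩
  | lamC hstep ih =>
    intro t h hd
    cases h with
    | lam h1 =>
      obtain ⟨A', hA', hsim⟩ := ih h1 (hd_lam hd)
      exact ⟨.lam A', rt_lam hA', .lam hsim⟩
  | casT θ hstep ih =>
    intro t h hd
    cases h with
    | cas hb h1 =>
      obtain ⟨Y', hY', hsim⟩ := ih h1 (hd_casT hd)
      exact ⟨.cas _ Y', rt_casT hY', .cas hb hsim⟩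
  | casB θ c a hθ hstep ih =>
    intro t h hd
    cases h with
    | cas hb h1 =>
      rename_i u u' Ξ Y
      have := hb c
      rw [hθ] at this
      rcases simO_some_inv this with ⟨w, hw, hsim⟩ | ⟨hw, hj⟩
      · obtain ⟨w', hw', hsim'⟩ := ih hsim (hd_casB hd hw)
        refine ⟨.cas (Function.update Ξ c (.some w')) Y, rt_casB hw hw', .cas ?_ h1⟩
        intro c'
        by_cases hc : c' = c
        · subst hc
          rw [Function.update_self, Function.update_self]
          exact .some hsim'
        · rw [Function.update_of_ne hc, Function.update_of_ne hc]
          exact hb c'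
      · refine ⟨.cas Ξ Y, .refl, .cas ?_ h1⟩
        intro c'
        by_cases hc : c' = c
        · subst hc
          rw [Function.update_self, hw]
          exact .junk (junk_step hj hstep)
        · rw [Function.update_of_ne hc]
          exact hb c'

theorem sim_rt {s s' : Tm n} (hs : ReflTransGen Step s s') :
    ∀ {t : Tm n}, Sim s t → HD t → ∃ t', ReflTransGen Step t t' ∧ Sim s' t' := by
  induction hs with
  | refl => intro t h hd; exact ⟨t, .refl, h⟩
  | tail h1 h2 ih =>
    intro t h hd
    obtain ⟨t', ht', hsim⟩ := ih h hd
    obtain ⟨t'', ht'', hsim'⟩ := sim_step h2 hsim (hd_of_rt hd ht')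
    exact ⟨t'', ht'.trans ht'', hsim'⟩

omit [NeZero n] in
theorem rt_eqvGen {s s' : Tm n} (h : ReflTransGen Step s s') : EqvGen Step s s' := by
  induction h with
  | refl => exact .refl _
  | tail h1 h2 ih => exact ih.trans _ _ _ (.rel _ _ h2)

end Main


/-- Assuming the calculus is confluent, case-completion reflects convertibility
on hereditarily defined terms: if `t₁`, `t₂` are hereditarily defined and
`⌈t₁⌉ ≈ ⌈t₂⌉`, then `t₁ ≈ t₂`. -/
theorem cpl_reflects_conv {n : ℕ} [NeZero n]
    (confl : ∀ a b c : Tm n, Relation.ReflTransGen Step a b →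
      Relation.ReflTransGen Step a c →
      ∃ d, Relation.ReflTransGen Step b d ∧ Relation.ReflTransGen Step c d)
    {t₁ t₂ : Tm n} (h₁ : HD t₁) (h₂ : HD t₂)
    (h : Relation.EqvGen Step (cpl t₁) (cpl t₂)) :
    Relation.EqvGen Step t₁ t₂ := by
  -- Church–Rosser: convertible terms have a common reduct
  have cr : ∀ a b : Tm n, Relation.EqvGen Step a b →
      ∃ d, Relation.ReflTransGen Step a d ∧ Relation.ReflTransGen Step b d := by
    intro a b hab
    induction hab with
    | rel x y hxy => exact ⟨y, .single hxy, .refl⟩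
    | refl x => exact ⟨x, .refl, .refl⟩
    | symm x y _ ih => obtain ⟨d, h1, h2⟩ := ih; exact ⟨d, h2, h1⟩
    | trans x y z _ _ ih1 ih2 =>
      obtain ⟨d1, hx1, hy1⟩ := ih1
      obtain ⟨d2, hy2, hz2⟩ := ih2
      obtain ⟨e, he1, he2⟩ := confl y d1 d2 hy1 hy2
      exact ⟨e, hx1.trans he1, hz2.trans he2⟩
  obtain ⟨s, hs1, hs2⟩ := cr _ _ h
  obtain ⟨u₁, hu₁, hsim₁⟩ := sim_rt hs1 (sim_cpl t₁) h₁
  obtain ⟨u₂, hu₂, hsim₂⟩ := sim_rt hs2 (sim_cpl t₂) h₂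
  have : u₁ = u₂ := sim_unique s hsim₁ hsim₂
  subst this
  exact (rt_eqvGen hu₁).trans _ _ _ ((rt_eqvGen hu₂).symm _ _)


end LC
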